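/- Let X, Y, W, Z be positive semidefinite n × n complex matrices such that X − W, W − Y, X − Z, Z − Y, and (X + Y) − (W + Z) are all positive semidefinite. Then det X + det Y ≥ det W + det Z, where all four determinants are nonnegative reals and the inequality is of real numbers. -/

import Mathlib

open Matrix ComplexOrder


variable {m : Type*} [Fintype m] [DecidableEq m]

/-- The real part of the determinant of a PSD matrix is nonnegative. -/
lemma psd_det_re_nonneg {M : Matrix m m ℂ} (hM : M.PosSemidef) : 0 ≤ M.det.re := by
  rw [hM.isHermitian.det_eq_prod_eigenvalues, ← RCLike.ofReal_prod]
  exact_mod_cast Finset.prod_nonneg fun i (_ : i ∈ Finset.univ) => hM.eigenvalues_nonneg i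

/-- Diagonal cofactor equals the determinant of the principal submatrix. -/
lemma adjugate_diag_eq_det_submatrix (M : Matrix m m ℂ) (a : m) :
    M.adjugate a a =
      (M.submatrix (Subtype.val : {j : m // ¬ j = a} → m) Subtype.val).det := by
  haveI : Unique {j : m // j = a} := ⟨⟨⟨a, rfl⟩⟩, fun x => by rcases x with ⟨x, hx⟩; subst hx; rfl⟩
  rw [adjugate_apply]
  set N := M.updateRow a (Pi.single a 1) with hN
  let e : {j : m // j = a} ⊕ {j : m // ¬ j = a} ≃ m := Equiv.sumCompl (· = a)
  have hsub : N.submatrix e e =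
      fromBlocks (Matrix.of fun _ _ => (1 : ℂ)) 0
        (Matrix.of fun (u : {j : m // ¬ j = a}) (_ : {j : m // j = a}) => M u.val a)
        (M.submatrix (Subtype.val : {j : m // ¬ j = a} → m) Subtype.val) := by
    ext i j
    cases i with
    | inl u =>
      cases j with
      | inl v =>
        rcases u with ⟨u, hu⟩; rcases v with ⟨v, hv⟩; subst hu; subst hv
        simp [e, N, Equiv.sumCompl, fromBlocks]
      | inr v =>
        rcases u with ⟨u, hu⟩; subst hu
        have hv : Pi.single (M := fun _ => ℂ) _ (1:ℂ) v.val = 0 := Pi.single_eq_of_ne v.2 1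
        simp [e, N, Equiv.sumCompl, fromBlocks, hv]
    | inr u =>
      cases j with
      | inl v =>
        rcases v with ⟨v, hv⟩; subst hv
        simp [e, N, Equiv.sumCompl, fromBlocks, Matrix.updateRow_ne u.2]
      | inr v =>
        simp [e, N, Equiv.sumCompl, fromBlocks, Matrix.updateRow_ne u.2]
  calc N.det = (N.submatrix e e).det := (det_submatrix_equiv_self e N).symm
    _ = _ := by
        rw [hsub, det_fromBlocks_zero₁₂, det_unique]
        simp

/-- Affine expansion of the determinant in a diagonal perturbation. -/
lemma det_add_smul_stdBasis (M : Matrix m m ℂ) (a : m) (c : ℂ) :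
    (M + c • Matrix.single a a 1).det = M.det + c * M.adjugate a a := by
  have h : M + c • Matrix.single a a 1
      = M.updateRow a (M a + c • (Pi.single a 1 : m → ℂ)) := by
    ext i j
    by_cases hi : i = a
    · subst hi
      simp [Matrix.updateRow_self, Matrix.single, Pi.single_apply, eq_comm]
    · simp only [Matrix.updateRow_ne hi, Matrix.add_apply, Matrix.smul_apply,
        Matrix.single, Matrix.of_apply, smul_eq_mul]
      rw [if_neg (by tauto), mul_zero, add_zero]
  rw [h, det_updateRow_add, det_updateRow_smul, updateRow_eq_self, adjugate_apply]

/-- Monotonicity of the determinant under adding a nonnegative diagonal. -/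
lemma core_mono (B : Matrix m m ℂ) (hB : B.PosSemidef) (d : m → ℝ) (hd : ∀ i, 0 ≤ d i) :
    B.det.re ≤ (B + Matrix.diagonal (fun i => (d i : ℂ))).det.re := by
  suffices H : ∀ s : Finset m, ∀ d : m → ℝ, (∀ i, 0 ≤ d i) → (∀ i ∉ s, d i = 0) →
      B.det.re ≤ (B + Matrix.diagonal (fun i => (d i : ℂ))).det.re by
    exact H Finset.univ d hd (by simp)
  intro s
  induction s using Finset.induction with
  | empty =>
    intro d _ h0
    have : (fun i => (d i : ℂ)) = fun _ => (0 : ℂ) := by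
      funext i; rw [h0 i (Finset.notMem_empty i)]; simp
    rw [this]
    simp
  | insert a s ha ih =>
    intro d hd h0
    set d' : m → ℝ := Function.update d a 0 with hd'def
    have hd' : ∀ i, 0 ≤ d' i := by
      intro i
      by_cases hi : i = a
      · subst hi; simp [d']
      · simpa [d', Function.update_of_ne hi] using hd i
    have h0' : ∀ i ∉ s, d' i = 0 := by
      intro i hi
      by_cases hia : i = a
      · subst hia; simp [d']
      · rw [hd'def, Function.update_of_ne hia]
        exact h0 i (by simp [hia, hi])
    have hsplit : Matrix.diagonal (fun i => (d i : ℂ))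
        = Matrix.diagonal (fun i => (d' i : ℂ)) + (d a : ℂ) • Matrix.single a a 1 := by
      ext i j
      by_cases hij : i = j
      · subst hij
        by_cases hia : i = a
        · subst hia; simp [d', Matrix.single]
        · simp [d', Matrix.single, Function.update_of_ne hia, Ne.symm hia]
      · have : ¬(a = i ∧ a = j) := fun ⟨h1, h2⟩ => hij (h1 ▸ h2)
        simp [Matrix.diagonal_apply_ne _ hij, Matrix.single, if_neg this]
    have hBD' : (B + Matrix.diagonal (fun i => (d' i : ℂ))).PosSemidef :=
      hB.add (Matrix.PosSemidef.diagonal (fun i => by simpa using Complex.zero_le_real.mpr (hd' i)))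
    have hadj : 0 ≤ ((B + Matrix.diagonal (fun i => (d' i : ℂ))).adjugate a a).re := by
      rw [adjugate_diag_eq_det_submatrix]
      exact psd_det_re_nonneg (hBD'.submatrix _)
    have hexp : B + Matrix.diagonal (fun i => (d i : ℂ))
        = (B + Matrix.diagonal (fun i => (d' i : ℂ))) + (d a : ℂ) • Matrix.single a a 1 := by
      rw [hsplit]; abel
    rw [hexp, det_add_smul_stdBasis, Complex.add_re, Complex.re_ofReal_mul]
    have := ih d' hd' h0'
    nlinarith [mul_nonneg (hd a) hadj]

/-- Monotonicity of `det.re` on the PSD cone. -/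
lemma det_re_mono {B R : Matrix m m ℂ} (hB : B.PosSemidef) (hR : R.PosSemidef) :
    B.det.re ≤ (B + R).det.re := by
  set U : Matrix m m ℂ := (hR.isHermitian.eigenvectorUnitary : Matrix m m ℂ) with hU
  have hU1 : Uᴴ * U = 1 := by
    simpa [hU, star_eq_conjTranspose] using (hR.isHermitian.eigenvectorUnitary.2).1
  have hU2 : U * Uᴴ = 1 := by
    simpa [hU, star_eq_conjTranspose] using (hR.isHermitian.eigenvectorUnitary.2).2
  have hdetU : Uᴴ.det * U.det = 1 := by rw [← det_mul, hU1, det_one]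
  have hdiag : Uᴴ * R * U = Matrix.diagonal (fun i => ((hR.isHermitian.eigenvalues i : ℝ) : ℂ)) := by
    have := hR.isHermitian.conjStarAlgAut_star_eigenvectorUnitary
    rw [Unitary.conjStarAlgAut_star_apply] at this
    rw [star_eq_conjTranspose] at this
    rw [this]
    rfl
  have hconj : ∀ C : Matrix m m ℂ, (Uᴴ * C * U).det = C.det := by
    intro C
    rw [det_mul, det_mul]
    calc Uᴴ.det * C.det * U.det = C.det * (Uᴴ.det * U.det) := by ring
      _ = C.det := by rw [hdetU, mul_one]
  have hexp : Uᴴ * (B + R) * U = (Uᴴ * B * U) +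
      Matrix.diagonal (fun i => ((hR.isHermitian.eigenvalues i : ℝ) : ℂ)) := by
    rw [← hdiag]
    noncomm_ring
  have h1 : (B + R).det.re = ((Uᴴ * B * U) +
      Matrix.diagonal (fun i => ((hR.isHermitian.eigenvalues i : ℝ) : ℂ))).det.re := by
    rw [← hexp, hconj]
  have h2 : B.det.re = (Uᴴ * B * U).det.re := by rw [hconj]
  rw [h1, h2]
  exact core_mono _ (hB.conjTranspose_mul_mul_same U) _ (fun i => hR.eigenvalues_nonneg i)

/-- Supermodularity core: diagonal middle term. -/
lemma core_super (A Q : Matrix m m ℂ) (hA : A.PosSemidef) (hQ : Q.PosSemidef)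
    (d : m → ℝ) (hd : ∀ i, 0 ≤ d i) :
    (A + Matrix.diagonal (fun i => (d i : ℂ))).det.re + (A + Q).det.re ≤
      (A + Matrix.diagonal (fun i => (d i : ℂ)) + Q).det.re + A.det.re := by
  suffices H : ∀ s : Finset m, ∀ d : m → ℝ, (∀ i, 0 ≤ d i) → (∀ i ∉ s, d i = 0) →
      (A + Matrix.diagonal (fun i => (d i : ℂ))).det.re + (A + Q).det.re ≤
      (A + Matrix.diagonal (fun i => (d i : ℂ)) + Q).det.re + A.det.re by
    exact H Finset.univ d hd (by simp)
  intro s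
  induction s using Finset.induction with
  | empty =>
    intro d _ h0
    have : (fun i => (d i : ℂ)) = fun _ => (0 : ℂ) := by
      funext i; rw [h0 i (Finset.notMem_empty i)]; simp
    rw [this]
    simp
    linarith
  | insert a s ha ih =>
    intro d hd h0
    set d' : m → ℝ := Function.update d a 0 with hd'def
    have hd' : ∀ i, 0 ≤ d' i := by
      intro i
      by_cases hi : i = a
      · subst hi; simp [d']
      · simpa [d', Function.update_of_ne hi] using hd i
    have h0' : ∀ i ∉ s, d' i = 0 := by
      intro i hi
      by_cases hia : i = a
      · subst hia; simp [d']
      · rw [hd'def, Function.update_of_ne hia]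
        exact h0 i (by simp [hia, hi])
    have hsplit : Matrix.diagonal (fun i => (d i : ℂ))
        = Matrix.diagonal (fun i => (d' i : ℂ)) + (d a : ℂ) • Matrix.single a a 1 := by
      ext i j
      by_cases hij : i = j
      · subst hij
        by_cases hia : i = a
        · subst hia; simp [d', Matrix.single]
        · simp [d', Matrix.single, Function.update_of_ne hia, Ne.symm hia]
      · have : ¬(a = i ∧ a = j) := fun ⟨h1, h2⟩ => hij (h1 ▸ h2)
        simp [Matrix.diagonal_apply_ne _ hij, Matrix.single, if_neg this]
    set D' : Matrix m m ℂ := Matrix.diagonal (fun i => (d' i : ℂ)) with hD'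
    have hD'psd : D'.PosSemidef :=
      Matrix.PosSemidef.diagonal (fun i => by simpa using Complex.zero_le_real.mpr (hd' i))
    -- slope comparison
    have hslope : ((A + D').adjugate a a).re ≤ ((A + D' + Q).adjugate a a).re := by
      rw [adjugate_diag_eq_det_submatrix, adjugate_diag_eq_det_submatrix]
      have hsub : (A + D' + Q).submatrix (Subtype.val : {j : m // ¬ j = a} → m)
            (Subtype.val : {j : m // ¬ j = a} → m)
          = (A + D').submatrix (Subtype.val : {j : m // ¬ j = a} → m)
              (Subtype.val : {j : m // ¬ j = a} → m)
            + Q.submatrix (Subtype.val : {j : m // ¬ j = a} → m)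
              (Subtype.val : {j : m // ¬ j = a} → m) := by
        ext i j; simp
      rw [hsub]
      exact det_re_mono ((hA.add hD'psd).submatrix _) (hQ.submatrix _)
    have hexp1 : A + Matrix.diagonal (fun i => (d i : ℂ))
        = (A + D') + (d a : ℂ) • Matrix.single a a 1 := by
      rw [hsplit]; abel
    have hexp2 : A + Matrix.diagonal (fun i => (d i : ℂ)) + Q
        = (A + D' + Q) + (d a : ℂ) • Matrix.single a a 1 := by
      rw [hsplit]; abel
    rw [hexp2, hexp1, det_add_smul_stdBasis, det_add_smul_stdBasis,
      Complex.add_re, Complex.add_re, Complex.re_ofReal_mul, Complex.re_ofReal_mul]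
    have := ih d' hd' h0'
    nlinarith [mul_le_mul_of_nonneg_left hslope (hd a)]

/-- Supermodularity of `det.re` on the PSD cone. -/
lemma det_re_supermod {A P Q : Matrix m m ℂ}
    (hA : A.PosSemidef) (hP : P.PosSemidef) (hQ : Q.PosSemidef) :
    (A + P).det.re + (A + Q).det.re ≤ (A + P + Q).det.re + A.det.re := by
  set U : Matrix m m ℂ := (hP.isHermitian.eigenvectorUnitary : Matrix m m ℂ) with hU
  have hU1 : Uᴴ * U = 1 := by
    simpa [hU, star_eq_conjTranspose] using (hP.isHermitian.eigenvectorUnitary.2).1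
  have hdetU : Uᴴ.det * U.det = 1 := by rw [← det_mul, hU1, det_one]
  have hdiag : Uᴴ * P * U = Matrix.diagonal (fun i => ((hP.isHermitian.eigenvalues i : ℝ) : ℂ)) := by
    have := hP.isHermitian.conjStarAlgAut_star_eigenvectorUnitary
    rw [Unitary.conjStarAlgAut_star_apply] at this
    rw [star_eq_conjTranspose] at this
    rw [this]; rfl
  have hconj : ∀ C : Matrix m m ℂ, (Uᴴ * C * U).det = C.det := by
    intro C
    rw [det_mul, det_mul]
    calc Uᴴ.det * C.det * U.det = C.det * (Uᴴ.det * U.det) := by ring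
      _ = C.det := by rw [hdetU, mul_one]
  set A' : Matrix m m ℂ := Uᴴ * A * U with hA'
  set Q' : Matrix m m ℂ := Uᴴ * Q * U with hQ'
  set D : Matrix m m ℂ := Matrix.diagonal (fun i => ((hP.isHermitian.eigenvalues i : ℝ) : ℂ)) with hD
  have e1 : Uᴴ * (A + P) * U = A' + D := by rw [← hdiag, hA']; noncomm_ring
  have e2 : Uᴴ * (A + Q) * U = A' + Q' := by rw [hA', hQ']; noncomm_ring
  have e3 : Uᴴ * (A + P + Q) * U = A' + D + Q' := by rw [← hdiag, hA', hQ']; noncomm_ring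
  have r1 : (A + P).det = (A' + D).det := by rw [← e1, hconj]
  have r2 : (A + Q).det = (A' + Q').det := by rw [← e2, hconj]
  have r3 : (A + P + Q).det = (A' + D + Q').det := by rw [← e3, hconj]
  have r4 : A.det = A'.det := by rw [hA', hconj]
  rw [r1, r2, r3, r4]
  exact core_super A' Q' (hA.conjTranspose_mul_mul_same U) (hQ.conjTranspose_mul_mul_same U)
    _ (fun i => hP.eigenvalues_nonneg i)

/-- **Lemma 2.2 (Lin).** If `X, Y, W, Z` are positive semidefinite with
`X ≥ W ≥ Y`, `X ≥ Z ≥ Y` and `X + Y ≥ W + Z` (in the Löwner order), then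
`det X + det Y ≥ det W + det Z`. -/
theorem det_add_det_ge_det_add_det {n : ℕ}
    (X Y W Z : Matrix (Fin n) (Fin n) ℂ)
    (hX : X.PosSemidef) (hY : Y.PosSemidef) (hW : W.PosSemidef) (hZ : Z.PosSemidef)
    (hXW : (X - W).PosSemidef) (hWY : (W - Y).PosSemidef)
    (hXZ : (X - Z).PosSemidef) (hZY : (Z - Y).PosSemidef)
    (hsum : (X + Y - (W + Z)).PosSemidef) :
    X.det.re + Y.det.re ≥ W.det.re + Z.det.re := by
  have hsup := det_re_supermod hY hWY hZY
  have eW : Y + (W - Y) = W := by abel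
  have eZ : Y + (Z - Y) = Z := by abel
  have eX : (Y + (W - Y) + (Z - Y)) + (X + Y - (W + Z)) = X := by abel
  have hmono : (Y + (W - Y) + (Z - Y)).det.re ≤ X.det.re := by
    have h1 : (Y + (W - Y) + (Z - Y)).PosSemidef := (hY.add hWY).add hZY
    have := det_re_mono h1 hsum
    rwa [eX] at this
  rw [eW] at hsup
  rw [eZ] at hsup
  rw [show W + (Z - Y) = Y + (W - Y) + (Z - Y) from by abel] at hsup
  linarith
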